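/- Let C_S4.4 be the class of all finite Kripke models whose frame consists of a world x and a nonempty finite set C with x∉C, where the accessibility relation R is the reflexive relation with C×C ⊆ R and x R y for every world y, and no other pairs (a root x below a single cluster C of final worlds). Then C_S4.4 enjoys 2-IP. -/

import Mathlib

/-- Modal formulas over countably many variables. -/
inductive ModalForm : Type where
  | var : ℕ → ModalForm
  | bot : ModalForm
  | and : ModalForm → ModalForm → ModalForm
  | or : ModalForm → ModalForm → ModalForm
  | not : ModalForm → ModalForm
  | imp : ModalForm → ModalForm → ModalForm
  | box : ModalForm → ModalForm

namespace ModalForm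

mutual
  /-- positively occurring variables -/
  def vpos : ModalForm → Finset ℕ
    | var p => {p}
    | bot => ∅
    | and φ ψ => vpos φ ∪ vpos ψ
    | or φ ψ => vpos φ ∪ vpos ψ
    | not φ => vneg φ
    | imp φ ψ => vneg φ ∪ vpos ψ
    | box φ => vpos φ
  /-- negatively occurring variables -/
  def vneg : ModalForm → Finset ℕ
    | var _ => ∅
    | bot => ∅
    | and φ ψ => vneg φ ∪ vneg ψ
    | or φ ψ => vneg φ ∪ vneg ψ
    | not φ => vpos φ
    | imp φ ψ => vpos φ ∪ vneg ψ
    | box φ => vneg φ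
end

/-- Modal depth: maximal nesting of `□`. -/
def depth : ModalForm → ℕ
  | var _ => 0
  | bot => 0
  | and φ ψ => max (depth φ) (depth ψ)
  | or φ ψ => max (depth φ) (depth ψ)
  | not φ => depth φ
  | imp φ ψ => max (depth φ) (depth ψ)
  | box φ => depth φ + 1

/-- `◇φ := ¬□¬φ` -/
def dia (φ : ModalForm) : ModalForm := not (box (not φ))

/-- `⊤ := ¬⊥` -/
def top : ModalForm := not bot

end ModalForm

/-- An S4 Kripke frame: nonempty set of worlds with a reflexive transitive relation. -/
structure KFrame : Type 1 where
  W : Type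
  R : W → W → Prop
  nonempty : Nonempty W
  refl : ∀ x, R x x
  trans : ∀ x y z, R x y → R y z → R x z

/-- A Kripke model: a frame with a valuation. -/
structure KModel : Type 1 extends KFrame where
  val : W → ℕ → Prop

/-- The model based on frame `F` with valuation `V`. -/
def KFrame.toModel (F : KFrame) (V : F.W → ℕ → Prop) : KModel :=
  { toKFrame := F, val := V }

/-- Satisfaction in a Kripke model. -/
def KModel.Sat (M : KModel) : M.W → ModalForm → Prop
  | w, .var p => M.val w p
  | _, .bot => False
  | w, .and φ ψ => M.Sat w φ ∧ M.Sat w ψ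
  | w, .or φ ψ => M.Sat w φ ∨ M.Sat w ψ
  | w, .not φ => ¬ M.Sat w φ
  | w, .imp φ ψ => M.Sat w φ → M.Sat w ψ
  | w, .box φ => ∀ y, M.R w y → M.Sat y φ

/-- `(M0,w0) →ₙ^{(P⁺,P⁻)} (M1,w1)`: every `(P⁺,P⁻)`-formula of depth ≤ n
satisfied at `(M0,w0)` is satisfied at `(M1,w1)`. -/
def ModalArrow (Pp Pm : Finset ℕ) (n : ℕ) (M0 : KModel) (w0 : M0.W)
    (M1 : KModel) (w1 : M1.W) : Prop :=
  ∀ φ : ModalForm, φ.vpos ⊆ Pp → φ.vneg ⊆ Pm → φ.depth ≤ n →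
    M0.Sat w0 φ → M1.Sat w1 φ

/-- p-morphism between frames. -/
def PMorphism (F G : KFrame) (f : F.W → G.W) : Prop :=
  (∀ x y, F.R x y → G.R (f x) (f y)) ∧
  (∀ x w, G.R (f x) w → ∃ z, F.R x z ∧ f z = w)

/-- The class `C` of Kripke models enjoys `n`-IP. -/
def EnjoysIP (C : Set KModel) (n : ℕ) : Prop :=
  ∀ (Pp Pm : Finset ℕ) (M0 M1 : KModel), M0 ∈ C → M1 ∈ C →
    ∀ (w0 : M0.W) (w1 : M1.W), ModalArrow Pp Pm n M0 w0 M1 w1 →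
      ∃ (F : KFrame) (wstar : F.W) (f0 : F.W → M0.W) (f1 : F.W → M1.W),
        (∀ V : F.W → ℕ → Prop, F.toModel V ∈ C) ∧
        PMorphism F M0.toKFrame f0 ∧
        PMorphism F M1.toKFrame f1 ∧
        f0 wstar = w0 ∧ f1 wstar = w1 ∧
        ∀ x : F.W, ModalArrow Pp Pm 0 M0 (f0 x) M1 (f1 x)

/-- A world is final iff every successor is also a predecessor. -/
def KModel.Final (M : KModel) (w : M.W) : Prop := ∀ y, M.R w y → M.R y w

/-- The cluster of a world. -/
def KModel.cluster (M : KModel) (w : M.W) : Set M.W := {u | M.R w u ∧ M.R u w}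

/-- Cluster `C0` of `M0` matches cluster `C1` of `M1`. -/
def Matches (Pp Pm : Finset ℕ) (M0 M1 : KModel) (C0 : Set M0.W) (C1 : Set M1.W) : Prop :=
  (∀ u0 ∈ C0, ∃ u1 ∈ C1, ModalArrow Pp Pm 0 M0 u0 M1 u1) ∧
  (∀ u1 ∈ C1, ∃ u0 ∈ C0, ModalArrow Pp Pm 0 M0 u0 M1 u1)

/-- `φ` is satisfied at every world of every model in `C`. -/
def ValidOn (C : Set KModel) (φ : ModalForm) : Prop :=
  ∀ M ∈ C, ∀ w : M.W, M.Sat w φ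

/-- The class of S4.4 models: a root `x` below a single nonempty finite cluster `C`. -/
def C_S44 : Set KModel :=
  {M | Finite M.W ∧ ∃ (x : M.W) (C : Set M.W), x ∉ C ∧ C.Nonempty ∧
    (∀ w : M.W, w = x ∨ w ∈ C) ∧
    ∀ u v : M.W, M.R u v ↔ (u = v ∨ (u ∈ C ∧ v ∈ C) ∨ u = x)}

section Aux

open ModalForm

/-- monotone transfer for depth-0 formulas -/
lemma mono (M0 M1 : KModel) (u0 : M0.W) (u1 : M1.W) :
    ∀ φ : ModalForm, φ.depth ≤ 0 →
    ((∀ p ∈ φ.vpos, M0.val u0 p → M1.val u1 p) →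
     (∀ p ∈ φ.vneg, M1.val u1 p → M0.val u0 p) →
     (M0.Sat u0 φ → M1.Sat u1 φ)) ∧
    ((∀ p ∈ φ.vneg, M0.val u0 p → M1.val u1 p) →
     (∀ p ∈ φ.vpos, M1.val u1 p → M0.val u0 p) →
     (M1.Sat u1 φ → M0.Sat u0 φ)) := by
  intro φ
  induction φ with
  | var p =>
    intro _
    constructor
    · intro hp _ h
      exact hp p (Finset.mem_singleton_self p) h
    · intro _ hm h
      exact hm p (Finset.mem_singleton_self p) h
  | bot => intro _; exact ⟨fun _ _ h => h.elim, fun _ _ h => h.elim⟩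
  | and φ ψ ihφ ihψ =>
    intro hd
    simp only [depth, Nat.max_le] at hd
    have hφ := ihφ hd.1
    have hψ := ihψ hd.2
    simp only [vpos, vneg, Finset.mem_union, KModel.Sat] at *
    constructor
    · intro hp hm h
      exact ⟨hφ.1 (fun p h' => hp p (Or.inl h')) (fun p h' => hm p (Or.inl h')) h.1,
             hψ.1 (fun p h' => hp p (Or.inr h')) (fun p h' => hm p (Or.inr h')) h.2⟩
    · intro hp hm h
      exact ⟨hφ.2 (fun p h' => hp p (Or.inl h')) (fun p h' => hm p (Or.inl h')) h.1,
             hψ.2 (fun p h' => hp p (Or.inr h')) (fun p h' => hm p (Or.inr h')) h.2⟩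
  | or φ ψ ihφ ihψ =>
    intro hd
    simp only [depth, Nat.max_le] at hd
    have hφ := ihφ hd.1
    have hψ := ihψ hd.2
    simp only [vpos, vneg, Finset.mem_union, KModel.Sat] at *
    constructor
    · intro hp hm h
      exact h.elim
        (fun h => Or.inl (hφ.1 (fun p h' => hp p (Or.inl h')) (fun p h' => hm p (Or.inl h')) h))
        (fun h => Or.inr (hψ.1 (fun p h' => hp p (Or.inr h')) (fun p h' => hm p (Or.inr h')) h))
    · intro hp hm h
      exact h.elim
        (fun h => Or.inl (hφ.2 (fun p h' => hp p (Or.inl h')) (fun p h' => hm p (Or.inl h')) h))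
        (fun h => Or.inr (hψ.2 (fun p h' => hp p (Or.inr h')) (fun p h' => hm p (Or.inr h')) h))
  | not φ ihφ =>
    intro hd
    simp only [depth] at hd
    have hφ := ihφ hd
    simp only [vpos, vneg, KModel.Sat] at *
    constructor
    · intro hp hm h h1
      exact h (hφ.2 hp hm h1)
    · intro hp hm h h0
      exact h (hφ.1 hp hm h0)
  | imp φ ψ ihφ ihψ =>
    intro hd
    simp only [depth, Nat.max_le] at hd
    have hφ := ihφ hd.1
    have hψ := ihψ hd.2
    simp only [vpos, vneg, Finset.mem_union, KModel.Sat] at *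
    constructor
    · intro hp hm h h1
      exact hψ.1 (fun p h' => hp p (Or.inr h')) (fun p h' => hm p (Or.inr h'))
        (h (hφ.2 (fun p h' => hp p (Or.inl h')) (fun p h' => hm p (Or.inl h')) h1))
    · intro hp hm h h0
      exact hψ.2 (fun p h' => hp p (Or.inr h')) (fun p h' => hm p (Or.inr h'))
        (h (hφ.1 (fun p h' => hp p (Or.inl h')) (fun p h' => hm p (Or.inl h')) h0))
  | box φ ih =>
    intro hd
    simp only [depth] at hd
    omega

/-- propositional similarity -/
def Prec (Pp Pm : Finset ℕ) (M0 M1 : KModel) (u0 : M0.W) (u1 : M1.W) : Prop :=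
  (∀ p ∈ Pp, M0.val u0 p → M1.val u1 p) ∧ (∀ p ∈ Pm, M1.val u1 p → M0.val u0 p)

lemma prec_arrow {Pp Pm : Finset ℕ} {M0 M1 : KModel} {u0 : M0.W} {u1 : M1.W}
    (h : Prec Pp Pm M0 M1 u0 u1) : ModalArrow Pp Pm 0 M0 u0 M1 u1 := by
  intro φ hvp hvn hd hs
  exact (mono M0 M1 u0 u1 φ hd).1 (fun p hp => h.1 p (hvp hp)) (fun p hp => h.2 p (hvn hp)) hs

def bigAnd : List ModalForm → ModalForm
  | [] => ModalForm.top
  | φ :: l => ModalForm.and φ (bigAnd l)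

def bigOr : List ModalForm → ModalForm
  | [] => ModalForm.bot
  | φ :: l => ModalForm.or φ (bigOr l)

lemma sat_bigAnd (M : KModel) (w : M.W) (l : List ModalForm) :
    M.Sat w (bigAnd l) ↔ ∀ φ ∈ l, M.Sat w φ := by
  induction l with
  | nil => simp [bigAnd, ModalForm.top, KModel.Sat]
  | cons φ l ih => simp [bigAnd, KModel.Sat, ih]

lemma sat_bigOr (M : KModel) (w : M.W) (l : List ModalForm) :
    M.Sat w (bigOr l) ↔ ∃ φ ∈ l, M.Sat w φ := by
  induction l with
  | nil => simp [bigOr, KModel.Sat]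
  | cons φ l ih => simp [bigOr, KModel.Sat, ih]

lemma vpos_bigAnd (l : List ModalForm) {p : ℕ} (h : p ∈ (bigAnd l).vpos) :
    ∃ φ ∈ l, p ∈ φ.vpos := by
  induction l with
  | nil => simp [bigAnd, ModalForm.top, vpos, vneg] at h
  | cons φ l ih =>
    simp only [bigAnd, vpos, Finset.mem_union] at h
    rcases h with h | h
    · exact ⟨φ, List.mem_cons_self, h⟩
    · obtain ⟨ψ, hψ, hp⟩ := ih h
      exact ⟨ψ, List.mem_cons_of_mem _ hψ, hp⟩

lemma vneg_bigAnd (l : List ModalForm) {p : ℕ} (h : p ∈ (bigAnd l).vneg) :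
    ∃ φ ∈ l, p ∈ φ.vneg := by
  induction l with
  | nil => simp [bigAnd, ModalForm.top, vpos, vneg] at h
  | cons φ l ih =>
    simp only [bigAnd, vneg, Finset.mem_union] at h
    rcases h with h | h
    · exact ⟨φ, List.mem_cons_self, h⟩
    · obtain ⟨ψ, hψ, hp⟩ := ih h
      exact ⟨ψ, List.mem_cons_of_mem _ hψ, hp⟩

lemma vpos_bigOr (l : List ModalForm) {p : ℕ} (h : p ∈ (bigOr l).vpos) :
    ∃ φ ∈ l, p ∈ φ.vpos := by
  induction l with
  | nil => simp [bigOr, vpos] at h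
  | cons φ l ih =>
    simp only [bigOr, vpos, Finset.mem_union] at h
    rcases h with h | h
    · exact ⟨φ, List.mem_cons_self, h⟩
    · obtain ⟨ψ, hψ, hp⟩ := ih h
      exact ⟨ψ, List.mem_cons_of_mem _ hψ, hp⟩

lemma vneg_bigOr (l : List ModalForm) {p : ℕ} (h : p ∈ (bigOr l).vneg) :
    ∃ φ ∈ l, p ∈ φ.vneg := by
  induction l with
  | nil => simp [bigOr, vneg] at h
  | cons φ l ih =>
    simp only [bigOr, vneg, Finset.mem_union] at h
    rcases h with h | h
    · exact ⟨φ, List.mem_cons_self, h⟩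
    · obtain ⟨ψ, hψ, hp⟩ := ih h
      exact ⟨ψ, List.mem_cons_of_mem _ hψ, hp⟩

lemma depth_bigAnd (l : List ModalForm) (h : ∀ φ ∈ l, φ.depth = 0) :
    (bigAnd l).depth = 0 := by
  induction l with
  | nil => simp [bigAnd, ModalForm.top, depth]
  | cons φ l ih =>
    simp only [bigAnd, depth]
    rw [h φ (List.mem_cons_self), ih (fun ψ hψ => h ψ (List.mem_cons_of_mem _ hψ))]
    simp

lemma depth_bigOr (l : List ModalForm) (h : ∀ φ ∈ l, φ.depth = 0) :
    (bigOr l).depth = 0 := by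
  induction l with
  | nil => simp [bigOr, depth]
  | cons φ l ih =>
    simp only [bigOr, depth]
    rw [h φ (List.mem_cons_self), ih (fun ψ hψ => h ψ (List.mem_cons_of_mem _ hψ))]
    simp

end Aux
section Chi

open ModalForm Classical

/-- characteristic propositional formula of a world -/
noncomputable def chi (Pp Pm : Finset ℕ) (M0 : KModel) (u0 : M0.W) : ModalForm :=
  ModalForm.and
    (bigAnd (Pp.toList.map fun p => if M0.val u0 p then ModalForm.var p else ModalForm.top))
    (bigAnd (Pm.toList.map fun p => if M0.val u0 p then ModalForm.top else ModalForm.not (ModalForm.var p)))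

lemma chi_depth (Pp Pm : Finset ℕ) (M0 : KModel) (u0 : M0.W) :
    (chi Pp Pm M0 u0).depth = 0 := by
  simp only [chi, depth]
  rw [depth_bigAnd, depth_bigAnd]
  · simp
  · intro φ hφ
    simp only [List.mem_map] at hφ
    obtain ⟨p, _, rfl⟩ := hφ
    split <;> simp [depth, ModalForm.top]
  · intro φ hφ
    simp only [List.mem_map] at hφ
    obtain ⟨p, _, rfl⟩ := hφ
    split <;> simp [depth, ModalForm.top]

lemma chi_vpos (Pp Pm : Finset ℕ) (M0 : KModel) (u0 : M0.W) :
    (chi Pp Pm M0 u0).vpos ⊆ Pp := by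
  intro p hp
  simp only [chi, vpos, Finset.mem_union] at hp
  rcases hp with h | h
  · obtain ⟨φ, hφ, hpφ⟩ := vpos_bigAnd _ h
    simp only [List.mem_map] at hφ
    obtain ⟨q, hq, rfl⟩ := hφ
    split at hpφ
    · simp only [vpos, Finset.mem_singleton] at hpφ
      subst hpφ
      exact Finset.mem_toList.mp hq
    · simp [ModalForm.top, vpos, vneg] at hpφ
  · obtain ⟨φ, hφ, hpφ⟩ := vpos_bigAnd _ h
    simp only [List.mem_map] at hφ
    obtain ⟨q, hq, rfl⟩ := hφ
    split at hpφ
    · simp [ModalForm.top, vpos, vneg] at hpφ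
    · simp [vpos, vneg] at hpφ

lemma chi_vneg (Pp Pm : Finset ℕ) (M0 : KModel) (u0 : M0.W) :
    (chi Pp Pm M0 u0).vneg ⊆ Pm := by
  intro p hp
  simp only [chi, vneg, Finset.mem_union] at hp
  rcases hp with h | h
  · obtain ⟨φ, hφ, hpφ⟩ := vneg_bigAnd _ h
    simp only [List.mem_map] at hφ
    obtain ⟨q, hq, rfl⟩ := hφ
    split at hpφ
    · simp [vpos, vneg] at hpφ
    · simp [ModalForm.top, vpos, vneg] at hpφ
  · obtain ⟨φ, hφ, hpφ⟩ := vneg_bigAnd _ h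
    simp only [List.mem_map] at hφ
    obtain ⟨q, hq, rfl⟩ := hφ
    split at hpφ
    · simp [ModalForm.top, vpos, vneg] at hpφ
    · simp only [vneg, vpos, Finset.mem_singleton] at hpφ
      subst hpφ
      exact Finset.mem_toList.mp hq

lemma chi_sat_self (Pp Pm : Finset ℕ) (M0 : KModel) (u0 : M0.W) :
    M0.Sat u0 (chi Pp Pm M0 u0) := by
  refine ⟨(sat_bigAnd _ _ _).mpr ?_, (sat_bigAnd _ _ _).mpr ?_⟩ <;>
  · intro φ hφ
    simp only [List.mem_map] at hφ
    obtain ⟨q, hq, rfl⟩ := hφ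
    by_cases h : M0.val u0 q
    · rw [if_pos h]
      first
      | exact h
      | exact fun hf => hf
    · rw [if_neg h]
      first
      | exact fun hf => hf
      | exact h

lemma chi_sat_prec {Pp Pm : Finset ℕ} {M0 M1 : KModel} {u0 : M0.W} {u1 : M1.W}
    (h : M1.Sat u1 (chi Pp Pm M0 u0)) : Prec Pp Pm M0 M1 u0 u1 := by
  obtain ⟨h1, h2⟩ := h
  rw [sat_bigAnd] at h1 h2
  constructor
  · intro p hp hv
    have := h1 (if M0.val u0 p then ModalForm.var p else ModalForm.top)
      (List.mem_map.mpr ⟨p, Finset.mem_toList.mpr hp, rfl⟩)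
    rw [if_pos hv] at this
    exact this
  · intro p hp hv
    by_contra hnv
    have := h2 (if M0.val u0 p then ModalForm.top else ModalForm.not (ModalForm.var p))
      (List.mem_map.mpr ⟨p, Finset.mem_toList.mpr hp, rfl⟩)
    rw [if_neg hnv] at this
    exact this hv

end Chi
section Matching

open ModalForm Classical

lemma match_fwd (Pp Pm : Finset ℕ) (M0 M1 : KModel)
    (x0 : M0.W) (C0 : Set M0.W) (hcov0 : ∀ w, w = x0 ∨ w ∈ C0)
    (hR0 : ∀ u v, M0.R u v ↔ (u = v ∨ (u ∈ C0 ∧ v ∈ C0) ∨ u = x0))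
    (x1 : M1.W) (C1 : Set M1.W) (hx1 : x1 ∉ C1) (hC1 : C1.Nonempty)
    (hcov1 : ∀ w, w = x1 ∨ w ∈ C1)
    (hR1 : ∀ u v, M1.R u v ↔ (u = v ∨ (u ∈ C1 ∧ v ∈ C1) ∨ u = x1))
    (w0 : M0.W) (w1 : M1.W) (h2 : ModalArrow Pp Pm 2 M0 w0 M1 w1)
    (u0 : M0.W) (hu0 : u0 ∈ C0) :
    ∃ u1 ∈ C1, Prec Pp Pm M0 M1 u0 u1 := by
  set χ := chi Pp Pm M0 u0 with hχ
  set φ := ModalForm.box (ModalForm.dia χ) with hφ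
  have hvp : φ.vpos ⊆ Pp := by
    simp only [hφ, ModalForm.dia, vpos, vneg]
    exact chi_vpos Pp Pm M0 u0
  have hvn : φ.vneg ⊆ Pm := by
    simp only [hφ, ModalForm.dia, vpos, vneg]
    exact chi_vneg Pp Pm M0 u0
  have hd : φ.depth ≤ 2 := by
    rw [show φ.depth = χ.depth + 2 from rfl, hχ, chi_depth]
  have hsat0 : M0.Sat w0 φ := by
    intro y hy
    intro hall
    have hRy : M0.R y u0 := by
      rw [hR0]
      rcases hcov0 y with h | h
      · exact Or.inr (Or.inr h)
      · exact Or.inr (Or.inl ⟨h, hu0⟩)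
    exact hall u0 hRy (chi_sat_self Pp Pm M0 u0)
  have hsat1 : M1.Sat w1 φ := h2 φ hvp hvn hd hsat0
  obtain ⟨c1, hc1⟩ := hC1
  have hRc1 : M1.R w1 c1 := by
    rw [hR1]
    rcases hcov1 w1 with h | h
    · exact Or.inr (Or.inr h)
    · exact Or.inr (Or.inl ⟨h, hc1⟩)
  have hdia := hsat1 c1 hRc1
  have hex : ∃ y, M1.R c1 y ∧ M1.Sat y χ := by
    by_contra hcon
    push_neg at hcon
    exact hdia (fun y hy hs => hcon y hy hs)
  obtain ⟨y, hRy, hy⟩ := hex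
  have hyC1 : y ∈ C1 := by
    rw [hR1] at hRy
    rcases hRy with rfl | ⟨_, h⟩ | rfl
    · exact hc1
    · exact h
    · exact absurd hc1 hx1
  exact ⟨y, hyC1, chi_sat_prec hy⟩

lemma match_bwd (Pp Pm : Finset ℕ) (M0 M1 : KModel) (hfin0 : Finite M0.W)
    (x0 : M0.W) (C0 : Set M0.W) (hx0 : x0 ∉ C0) (hC0 : C0.Nonempty)
    (hcov0 : ∀ w, w = x0 ∨ w ∈ C0)
    (hR0 : ∀ u v, M0.R u v ↔ (u = v ∨ (u ∈ C0 ∧ v ∈ C0) ∨ u = x0))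
    (x1 : M1.W) (C1 : Set M1.W)
    (hcov1 : ∀ w, w = x1 ∨ w ∈ C1)
    (hR1 : ∀ u v, M1.R u v ↔ (u = v ∨ (u ∈ C1 ∧ v ∈ C1) ∨ u = x1))
    (w0 : M0.W) (w1 : M1.W) (h2 : ModalArrow Pp Pm 2 M0 w0 M1 w1)
    (u1 : M1.W) (hu1 : u1 ∈ C1) :
    ∃ u0 ∈ C0, Prec Pp Pm M0 M1 u0 u1 := by
  by_contra hno
  push_neg at hno
  have hlit : ∀ u : M0.W, ∃ ℓ : ModalForm, ℓ.depth = 0 ∧ ℓ.vpos ⊆ Pp ∧ ℓ.vneg ⊆ Pm ∧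
      ¬ M1.Sat u1 ℓ ∧ (u ∈ C0 → M0.Sat u ℓ) := by
    intro u
    by_cases hu : u ∈ C0
    · have hnp := hno u hu
      rw [Prec, not_and_or] at hnp
      rcases hnp with h | h
      · push_neg at h
        obtain ⟨p, hp, hv0, hv1⟩ := h
        exact ⟨ModalForm.var p, rfl, by simp [vpos, hp], by simp [vneg],
          hv1, fun _ => hv0⟩
      · push_neg at h
        obtain ⟨p, hp, hv1, hv0⟩ := h
        exact ⟨ModalForm.not (ModalForm.var p), rfl, by simp [vpos, vneg],
          by simp [vpos, vneg, hp], fun hh => hh hv1, fun _ => hv0⟩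
    · exact ⟨ModalForm.bot, rfl, by simp [vpos], by simp [vneg],
        fun h => h, fun h => absurd h hu⟩
  choose g hg using hlit
  haveI := hfin0
  haveI : Fintype M0.W := Fintype.ofFinite M0.W
  set L := (Finset.univ : Finset M0.W).toList.map g with hL
  set ε := bigOr L with hε
  set φ := ModalForm.dia (ModalForm.box ε) with hφ
  have hmemL : ∀ ψ ∈ L, ∃ u : M0.W, ψ = g u := by
    intro ψ hψ
    simp only [hL, List.mem_map] at hψ
    obtain ⟨u, _, rfl⟩ := hψ
    exact ⟨u, rfl⟩
  have hvp : φ.vpos ⊆ Pp := by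
    simp only [hφ, ModalForm.dia, vpos, vneg]
    intro p hp
    obtain ⟨ψ, hψ, hpψ⟩ := vpos_bigOr _ hp
    obtain ⟨u, rfl⟩ := hmemL ψ hψ
    exact (hg u).2.1 hpψ
  have hvn : φ.vneg ⊆ Pm := by
    simp only [hφ, ModalForm.dia, vpos, vneg]
    intro p hp
    obtain ⟨ψ, hψ, hpψ⟩ := vneg_bigOr _ hp
    obtain ⟨u, rfl⟩ := hmemL ψ hψ
    exact (hg u).2.2.1 hpψ
  have hd : φ.depth ≤ 2 := by
    have h0 : ε.depth = 0 := by
      rw [hε]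
      exact depth_bigOr _ (fun ψ hψ => by obtain ⟨u, rfl⟩ := hmemL ψ hψ; exact (hg u).1)
    rw [show φ.depth = ε.depth + 2 from rfl, h0]
  obtain ⟨c0, hc0⟩ := hC0
  have hsat0 : M0.Sat w0 φ := by
    intro hall
    have hRc0 : M0.R w0 c0 := by
      rw [hR0]
      rcases hcov0 w0 with h | h
      · exact Or.inr (Or.inr h)
      · exact Or.inr (Or.inl ⟨h, hc0⟩)
    refine hall c0 hRc0 ?_
    intro z hz
    have hzC0 : z ∈ C0 := by
      rw [hR0] at hz
      rcases hz with rfl | ⟨_, h⟩ | rfl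
      · exact hc0
      · exact h
      · exact absurd hc0 hx0
    rw [hε, sat_bigOr]
    exact ⟨g z, List.mem_map.mpr ⟨z, Finset.mem_toList.mpr (Finset.mem_univ z), rfl⟩,
      (hg z).2.2.2.2 hzC0⟩
  have hsat1 : M1.Sat w1 φ := h2 φ hvp hvn hd hsat0
  have hex : ∃ y, M1.R w1 y ∧ M1.Sat y (ModalForm.box ε) := by
    by_contra hcon
    push_neg at hcon
    exact hsat1 (fun y hy hs => hcon y hy hs)
  obtain ⟨y, hRy, hy⟩ := hex
  have hRyu1 : M1.R y u1 := by
    rw [hR1]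
    rcases hcov1 y with h | h
    · exact Or.inr (Or.inr h)
    · exact Or.inr (Or.inl ⟨h, hu1⟩)
  have hsatε : M1.Sat u1 ε := hy u1 hRyu1
  rw [hε, sat_bigOr] at hsatε
  obtain ⟨ψ, hψ, hsψ⟩ := hsatε
  obtain ⟨u, rfl⟩ := hmemL ψ hψ
  exact (hg u).2.2.2.1 hsψ

end Matching
theorem stmt11 : EnjoysIP C_S44 2 := by
  intro Pp Pm M0 M1 hM0 hM1 w0 w1 h2
  obtain ⟨hfin0, x0, C0, hx0, hC0ne, hcov0, hR0⟩ := hM0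
  obtain ⟨hfin1, x1, C1, hx1, hC1ne, hcov1, hR1⟩ := hM1
  have hm1 : ∀ u0 ∈ C0, ∃ u1 ∈ C1, Prec Pp Pm M0 M1 u0 u1 :=
    fun u0 hu0 => match_fwd Pp Pm M0 M1 x0 C0 hcov0 hR0 x1 C1 hx1 hC1ne hcov1 hR1 w0 w1 h2 u0 hu0
  have hm2 : ∀ u1 ∈ C1, ∃ u0 ∈ C0, Prec Pp Pm M0 M1 u0 u1 :=
    fun u1 hu1 => match_bwd Pp Pm M0 M1 hfin0 x0 C0 hx0 hC0ne hcov0 hR0 x1 C1 hcov1 hR1 w0 w1 h2 u1 hu1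
  haveI := hfin0
  haveI := hfin1
  set Wc := {p : M0.W × M1.W // p.1 ∈ C0 ∧ p.2 ∈ C1 ∧ Prec Pp Pm M0 M1 p.1 p.2} with hWc
  obtain ⟨c0, hc0⟩ := hC0ne
  obtain ⟨d1, hd1, hprec0⟩ := hm1 c0 hc0
  have hcne : Nonempty Wc := ⟨⟨(c0, d1), hc0, hd1, hprec0⟩⟩
  haveI : Finite Wc := Subtype.finite
  haveI : Fintype Wc := Fintype.ofFinite Wc
  refine ⟨⟨Option Wc, fun a b => a = b ∨ (a ≠ none ∧ b ≠ none) ∨ a = none, ⟨none⟩,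
    fun _ => Or.inl rfl, ?_⟩, none,
    (fun a => a.elim w0 (fun p => p.1.1)), (fun a => a.elim w1 (fun p => p.1.2)),
    ?_, ⟨?_, ?_⟩, ⟨?_, ?_⟩, rfl, rfl, ?_⟩
  · -- transitivity
    intro a b c hab hbc
    rcases hab with rfl | ⟨ha, hb⟩ | rfl
    · exact hbc
    · rcases hbc with rfl | ⟨_, hc⟩ | rfl
      · exact Or.inr (Or.inl ⟨ha, hb⟩)
      · exact Or.inr (Or.inl ⟨ha, hc⟩)
      · exact absurd rfl hb
    · exact Or.inr (Or.inr rfl)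
  · -- membership in C_S44
    intro V
    refine ⟨show Finite (Option Wc) from inferInstance, none, {w : Option Wc | w ≠ none},
      fun h => h rfl, ?_, ?_, fun u v => Iff.rfl⟩
    · exact ⟨some (Classical.choice hcne), fun h => Option.some_ne_none _ h⟩
    · intro w
      cases w with
      | none => exact Or.inl rfl
      | some a => exact Or.inr (fun h => Option.some_ne_none _ h)
  · -- f0 forward
    intro a b hab
    rcases hab with rfl | ⟨ha, hb⟩ | rfl
    · exact M0.refl _
    · rw [hR0]
      obtain ⟨a', rfl⟩ := Option.ne_none_iff_exists'.mp ha
      obtain ⟨b', rfl⟩ := Option.ne_none_iff_exists'.mp hb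
      exact Or.inr (Or.inl ⟨a'.2.1, b'.2.1⟩)
    · rw [hR0]
      cases b with
      | none => exact Or.inl rfl
      | some b' =>
        rcases hcov0 w0 with h | h
        · exact Or.inr (Or.inr h)
        · exact Or.inr (Or.inl ⟨h, b'.2.1⟩)
  · -- f0 back
    intro a w haw
    cases a with
    | none =>
      rw [hR0] at haw
      have hw : w = w0 ∨ w ∈ C0 := by
        rcases haw with h | ⟨_, h⟩ | h
        · exact Or.inl h.symm
        · exact Or.inr h
        · rcases hcov0 w with h' | h'
          · exact Or.inl (h' ▸ h ▸ rfl)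
          · exact Or.inr h'
      rcases hw with rfl | hw
      · exact ⟨none, Or.inl rfl, rfl⟩
      · obtain ⟨u1, hu1, hp⟩ := hm1 w hw
        exact ⟨some ⟨(w, u1), hw, hu1, hp⟩, Or.inr (Or.inr rfl), rfl⟩
    | some a' =>
      rw [hR0] at haw
      have hane : a'.1.1 ≠ x0 := fun h => hx0 (h ▸ a'.2.1)
      rcases haw with h | ⟨_, h⟩ | h
      · exact ⟨some a', Or.inl rfl, h⟩
      · obtain ⟨u1, hu1, hp⟩ := hm1 w h
        exact ⟨some ⟨(w, u1), h, hu1, hp⟩, Or.inr (Or.inl ⟨by simp, by simp⟩), rfl⟩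
      · exact absurd h hane
  · -- f1 forward
    intro a b hab
    rcases hab with rfl | ⟨ha, hb⟩ | rfl
    · exact M1.refl _
    · rw [hR1]
      obtain ⟨a', rfl⟩ := Option.ne_none_iff_exists'.mp ha
      obtain ⟨b', rfl⟩ := Option.ne_none_iff_exists'.mp hb
      exact Or.inr (Or.inl ⟨a'.2.2.1, b'.2.2.1⟩)
    · rw [hR1]
      cases b with
      | none => exact Or.inl rfl
      | some b' =>
        rcases hcov1 w1 with h | h
        · exact Or.inr (Or.inr h)
        · exact Or.inr (Or.inl ⟨h, b'.2.2.1⟩)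
  · -- f1 back
    intro a w haw
    cases a with
    | none =>
      rw [hR1] at haw
      have hw : w = w1 ∨ w ∈ C1 := by
        rcases haw with h | ⟨_, h⟩ | h
        · exact Or.inl h.symm
        · exact Or.inr h
        · rcases hcov1 w with h' | h'
          · exact Or.inl (h' ▸ h ▸ rfl)
          · exact Or.inr h'
      rcases hw with rfl | hw
      · exact ⟨none, Or.inl rfl, rfl⟩
      · obtain ⟨u0, hu0, hp⟩ := hm2 w hw
        exact ⟨some ⟨(u0, w), hu0, hw, hp⟩, Or.inr (Or.inr rfl), rfl⟩
    | some a' =>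
      rw [hR1] at haw
      have hane : a'.1.2 ≠ x1 := fun h => hx1 (h ▸ a'.2.2.1)
      rcases haw with h | ⟨_, h⟩ | h
      · exact ⟨some a', Or.inl rfl, h⟩
      · obtain ⟨u0, hu0, hp⟩ := hm2 w h
        exact ⟨some ⟨(u0, w), hu0, h, hp⟩, Or.inr (Or.inl ⟨by simp, by simp⟩), rfl⟩
      · exact absurd h hane
  · -- modal arrow at each world
    intro a
    cases a with
    | none => exact fun φ hp hn hd hs => h2 φ hp hn (le_trans hd (by norm_num)) hs
    | some a' => exact prec_arrow a'.2.2.2
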